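/- arXiv:2204.08659 — 3 statements merged into one kernel-verified Lean document; each statement's English description precedes it below -/
import Mathlib

section
/- Let Y ∼ NB(r,p) (negative binomial counting failures before the r-th success, p ∈ (0,1)). For any n ∈ ℕ with P(Y > n) > 0, the truncated mean satisfies E[Y | Y > n] = E[Y] + (n+1)/(p(1+β_{n+1})), where β_{n+1} = P(Y > n+1)/P(Y = n+1). -/
open MeasureTheory

lemma nb_summable_aux {x : ℝ} (hx0 : 0 ≤ x) (hx1 : x < 1) (k : ℕ) :
    Summable (fun y : ℕ => ((y : ℝ) + 1) ^ k * x ^ y) := by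
  have h : Summable (fun y : ℕ => (y : ℝ) ^ k * x ^ y) :=
    summable_pow_mul_geometric_of_norm_lt_one k (by rwa [Real.norm_eq_abs, abs_of_nonneg hx0])
  have h2 : Summable (fun y : ℕ => ((y + 1 : ℕ) : ℝ) ^ k * x ^ (y + 1)) :=
    ((summable_nat_add_iff 1).2 h)
  rcases eq_or_lt_of_le hx0 with h0 | h0
  · exact summable_of_finite_support (by
      apply Set.Finite.subset (Set.finite_singleton 0)
      intro y hy
      simp only [Function.mem_support] at hy
      by_contra hne
      rw [← h0, zero_pow hne] at hy
      simp at hy)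
  · have h3 := h2.mul_left x⁻¹
    apply h3.congr
    intro y
    push_cast
    rw [pow_succ]
    field_simp

section NB
variable (r : ℕ) (p : ℝ)

noncomputable def nbA (y : ℕ) : ℝ := (Nat.choose (y + r - 1) y : ℝ) * p ^ r * (1 - p) ^ y

lemma nbA_nonneg (hp : p ∈ Set.Ioo (0:ℝ) 1) (y : ℕ) : 0 ≤ nbA r p y := by
  unfold nbA
  have h1 : (0:ℝ) ≤ p := le_of_lt hp.1
  have h2 : (0:ℝ) ≤ 1 - p := by linarith [hp.2]
  positivity

lemma nbA_le (hr : 1 ≤ r) (hp : p ∈ Set.Ioo (0:ℝ) 1) (y : ℕ) :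
    nbA r p y ≤ ((y : ℝ) + r) ^ (r - 1) * (1 - p) ^ y := by
  unfold nbA
  have h2 : (0:ℝ) ≤ 1 - p := by linarith [hp.2]
  have hc : (Nat.choose (y + r - 1) y : ℝ) ≤ ((y : ℝ) + r) ^ (r - 1) := by
    have : Nat.choose (y + r - 1) y = Nat.choose (y + r - 1) (r - 1) := by
      apply Nat.choose_symm_of_eq_add
      omega
    rw [this]
    calc (Nat.choose (y + r - 1) (r - 1) : ℝ) ≤ ((y + r - 1 : ℕ) : ℝ) ^ (r - 1) := by
          exact_mod_cast Nat.choose_le_pow _ _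
      _ ≤ ((y : ℝ) + r) ^ (r - 1) := by
          apply pow_le_pow_left₀ (by positivity)
          have : ((y + r - 1 : ℕ) : ℝ) ≤ (y : ℝ) + r := by
            have : (y + r - 1 : ℕ) ≤ y + r := by omega
            exact_mod_cast le_trans this (le_refl _)
          exact this
  have hp1 : p ^ r ≤ 1 := pow_le_one₀ (le_of_lt hp.1) (le_of_lt hp.2)
  calc (Nat.choose (y + r - 1) y : ℝ) * p ^ r * (1 - p) ^ y
      ≤ ((y : ℝ) + r) ^ (r - 1) * 1 * (1 - p) ^ y := by
        apply mul_le_mul _ le_rfl (pow_nonneg h2 y) (by positivity)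
        apply mul_le_mul hc hp1 (pow_nonneg (le_of_lt hp.1) r) (by positivity)
    _ = ((y : ℝ) + r) ^ (r - 1) * (1 - p) ^ y := by ring

lemma nb_summable (hr : 1 ≤ r) (hp : p ∈ Set.Ioo (0:ℝ) 1) :
    Summable (nbA r p) ∧ Summable (fun y : ℕ => (y : ℝ) * nbA r p y) := by
  have hx0 : (0:ℝ) ≤ 1 - p := by linarith [hp.2]
  have hx1 : (1:ℝ) - p < 1 := by linarith [hp.1]
  have hg : Summable (fun y : ℕ => ((r:ℝ))^r * (((y:ℝ) + 1) ^ r * (1 - p) ^ y)) :=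
    (nb_summable_aux hx0 hx1 r).mul_left _
  have key : ∀ y : ℕ, ((y : ℝ) + r) ^ r * (1 - p) ^ y
      ≤ ((r:ℝ))^r * (((y:ℝ) + 1) ^ r * (1 - p) ^ y) := by
    intro y
    have h1 : ((y : ℝ) + r) ≤ (r:ℝ) * ((y:ℝ) + 1) := by
      have hr' : (1:ℝ) ≤ (r:ℝ) := by exact_mod_cast hr
      nlinarith [Nat.cast_nonneg (α := ℝ) y]
    calc ((y : ℝ) + r) ^ r * (1 - p) ^ y ≤ ((r:ℝ) * ((y:ℝ) + 1)) ^ r * (1 - p) ^ y := by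
          apply mul_le_mul_of_nonneg_right (pow_le_pow_left₀ (by positivity) h1 r) (by positivity)
      _ = ((r:ℝ))^r * (((y:ℝ) + 1) ^ r * (1 - p) ^ y) := by rw [mul_pow]; ring
  have hbig : Summable (fun y : ℕ => ((y : ℝ) + r) ^ r * (1 - p) ^ y) :=
    Summable.of_nonneg_of_le (fun y => by positivity) key hg
  constructor
  · apply Summable.of_nonneg_of_le (nbA_nonneg r p hp) _ hbig
    intro y
    calc nbA r p y ≤ ((y : ℝ) + r) ^ (r - 1) * (1 - p) ^ y := nbA_le r p hr hp y
      _ ≤ ((y : ℝ) + r) ^ r * (1 - p) ^ y := by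
          apply mul_le_mul_of_nonneg_right _ (by positivity)
          apply pow_le_pow_right₀ _ (by omega)
          have : (1:ℝ) ≤ (r:ℝ) := by exact_mod_cast hr
          linarith [Nat.cast_nonneg (α := ℝ) y]
  · apply Summable.of_nonneg_of_le (fun y => mul_nonneg (Nat.cast_nonneg y) (nbA_nonneg r p hp y)) _ hbig
    intro y
    have h1 : (y:ℝ) * nbA r p y ≤ (y:ℝ) * (((y : ℝ) + r) ^ (r - 1) * (1 - p) ^ y) :=
      mul_le_mul_of_nonneg_left (nbA_le r p hr hp y) (Nat.cast_nonneg y)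
    have h2 : (y:ℝ) * (((y : ℝ) + r) ^ (r - 1) * (1 - p) ^ y) ≤ ((y : ℝ) + r) ^ r * (1 - p) ^ y := by
      have hy : (y:ℝ) ≤ (y:ℝ) + r := le_add_of_nonneg_right (Nat.cast_nonneg r)
      have h3 : (y:ℝ) * ((y : ℝ) + r) ^ (r - 1) ≤ ((y : ℝ) + r) * ((y : ℝ) + r) ^ (r - 1) :=
        mul_le_mul_of_nonneg_right (by linarith [Nat.cast_nonneg (α := ℝ) r]) (by positivity)
      have h4 : ((y : ℝ) + r) * ((y : ℝ) + r) ^ (r - 1) = ((y : ℝ) + r) ^ r := by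
        rw [← pow_succ']
        congr 1
        omega
      calc (y:ℝ) * (((y : ℝ) + r) ^ (r - 1) * (1 - p) ^ y)
          = ((y:ℝ) * ((y : ℝ) + r) ^ (r - 1)) * (1 - p) ^ y := by ring
        _ ≤ (((y : ℝ) + r) ^ r) * (1 - p) ^ y := by
            apply mul_le_mul_of_nonneg_right _ (by positivity)
            rw [← h4]; exact h3
    linarith


lemma nbA_rec (hr : 1 ≤ r) (y : ℕ) :
    ((y:ℝ) + 1) * nbA r p (y + 1) = (1 - p) * (((y:ℝ) + r) * nbA r p y) := by
  have h := Nat.add_one_mul_choose_eq (y + r - 1) y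
  have e1 : (y + r - 1) + 1 = y + r := by omega
  have e2 : (y + 1) + r - 1 = y + r := by omega
  rw [e1] at h
  unfold nbA
  rw [e2]
  have hc : ((y + r : ℕ) : ℝ) * (Nat.choose (y + r - 1) y : ℝ)
      = (Nat.choose (y + r) (y + 1) : ℝ) * ((y : ℝ) + 1) := by
    exact_mod_cast congrArg (Nat.cast (R := ℝ)) h
  push_cast at hc ⊢
  rw [pow_succ]
  linear_combination (-(1 - p) * p ^ r * (1 - p) ^ y) * hc

lemma nb_keyA (hr : 1 ≤ r) (hp : p ∈ Set.Ioo (0:ℝ) 1) (m : ℕ) :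
    p * ∑' k : ℕ, ((k + m : ℕ) : ℝ) * nbA r p (k + m)
      = (m : ℝ) * nbA r p m + r * (1 - p) * ∑' k : ℕ, nbA r p (k + m) := by
  obtain ⟨hsa, hsb⟩ := nb_summable r p hr hp
  have hsa' : Summable (fun k : ℕ => nbA r p (k + m)) := (summable_nat_add_iff m).2 hsa
  have hsb' : Summable (fun k : ℕ => ((k + m : ℕ) : ℝ) * nbA r p (k + m)) :=
    (summable_nat_add_iff m).2 hsb
  set T := ∑' k : ℕ, ((k + m : ℕ) : ℝ) * nbA r p (k + m) with hT
  set A := ∑' k : ℕ, nbA r p (k + m) with hA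
  have hstep : ∀ k : ℕ, ((k + 1 + m : ℕ) : ℝ) * nbA r p (k + 1 + m)
      = (1 - p) * (((k + m : ℕ) : ℝ) * nbA r p (k + m)) + r * (1 - p) * nbA r p (k + m) := by
    intro k
    have h := nbA_rec r p hr (k + m)
    have e : k + 1 + m = (k + m) + 1 := by omega
    rw [e]
    push_cast at h ⊢
    nlinarith [h]
  have h0 : T = (m : ℝ) * nbA r p m + ∑' k : ℕ, ((k + 1 + m : ℕ) : ℝ) * nbA r p (k + 1 + m) := by
    rw [hT, Summable.tsum_eq_zero_add hsb']
    simp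
  have h1 : ∑' k : ℕ, ((k + 1 + m : ℕ) : ℝ) * nbA r p (k + 1 + m)
      = (1 - p) * T + r * (1 - p) * A := by
    calc ∑' k : ℕ, ((k + 1 + m : ℕ) : ℝ) * nbA r p (k + 1 + m)
        = ∑' k : ℕ, ((1 - p) * (((k + m : ℕ) : ℝ) * nbA r p (k + m))
            + r * (1 - p) * nbA r p (k + m)) := by
          exact tsum_congr hstep
      _ = (1 - p) * T + r * (1 - p) * A := by
          rw [Summable.tsum_add (hsb'.mul_left _) (hsa'.mul_left _), tsum_mul_left, tsum_mul_left]
  have := h0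
  rw [h1] at this
  linarith [this]

end NB

/-- For Y ∼ NB(r,p) and n with P(Y > n) > 0,
E[Y | Y > n] = E[Y] + (n+1)/(p(1+β_{n+1})) with β_{n+1} = P(Y > n+1)/P(Y = n+1). -/
theorem negative_binomial_truncated_mean
    {Ω : Type*} [MeasurableSpace Ω] (μ : Measure Ω) [IsProbabilityMeasure μ]
    (r : ℕ) (hr : 1 ≤ r) (p : ℝ) (hp : p ∈ Set.Ioo (0:ℝ) 1)
    (Y : Ω → ℕ) (hYmeas : Measurable Y)
    (hY : ∀ y : ℕ, μ {ω | Y ω = y}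
      = ENNReal.ofReal ((Nat.choose (y + r - 1) y : ℝ) * p ^ r * (1 - p) ^ y))
    (n : ℕ) (hpos : μ {ω | n < Y ω} ≠ 0) :
    (∫ ω in {ω | n < Y ω}, (Y ω : ℝ) ∂μ) / (μ {ω | n < Y ω}).toReal
      = (∫ ω, (Y ω : ℝ) ∂μ)
        + ((n : ℝ) + 1) /
          (p * (1 + (μ {ω | n + 1 < Y ω}).toReal / (μ {ω | Y ω = n + 1}).toReal)) := by
  obtain ⟨hsa, hsb⟩ := nb_summable r p hr hp
  have hanon := nbA_nonneg r p hp
  have hY' : ∀ y : ℕ, μ {ω | Y ω = y} = ENNReal.ofReal (nbA r p y) := hY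
  have hmeasY : ∀ y : ℕ, MeasurableSet {ω | Y ω = y} :=
    fun y => hYmeas (measurableSet_singleton y)
  -- total mass
  have htot : ∑' y : ℕ, nbA r p y = 1 := by
    have hdisj : Pairwise (Function.onFun Disjoint fun y : ℕ => {ω | Y ω = y}) := by
      intro i j hij
      simp only [Function.onFun, Set.disjoint_left, Set.mem_setOf_eq]
      intro ω h1 h2
      exact hij (h1 ▸ h2 ▸ rfl)
    have h1 : ∑' y : ℕ, μ {ω | Y ω = y} = 1 := by
      rw [← measure_iUnion hdisj hmeasY]
      have : (⋃ y : ℕ, {ω | Y ω = y}) = Set.univ := by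
        ext ω; simp
      rw [this, measure_univ]
    simp_rw [hY'] at h1
    rw [← ENNReal.ofReal_tsum_of_nonneg hanon hsa] at h1
    exact ENNReal.ofReal_eq_one.1 h1
  -- tail measures
  have htail : ∀ m : ℕ, μ {ω | m < Y ω} = ∑' k : ℕ, ENNReal.ofReal (nbA r p (k + (m + 1))) := by
    intro m
    have hU : {ω | m < Y ω} = ⋃ k : ℕ, {ω | Y ω = k + (m + 1)} := by
      ext ω
      simp only [Set.mem_setOf_eq, Set.mem_iUnion]
      constructor
      · intro h; exact ⟨Y ω - (m + 1), by omega⟩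
      · rintro ⟨k, hk⟩; omega
    have hdisj : Pairwise (Function.onFun Disjoint fun k : ℕ => {ω | Y ω = k + (m + 1)}) := by
      intro i j hij
      simp only [Function.onFun, Set.disjoint_left, Set.mem_setOf_eq]
      intro ω h1 h2
      omega
    rw [hU, measure_iUnion hdisj (fun k => hmeasY _)]
    simp_rw [hY']
  have htailsum : ∀ m : ℕ, Summable (fun k : ℕ => nbA r p (k + (m + 1))) :=
    fun m => (summable_nat_add_iff (m + 1)).2 hsa
  have htailR : ∀ m : ℕ, (μ {ω | m < Y ω}).toReal = ∑' k : ℕ, nbA r p (k + (m + 1)) := by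
    intro m
    rw [htail m, ← ENNReal.ofReal_tsum_of_nonneg (fun k => hanon _) (htailsum m),
      ENNReal.toReal_ofReal (tsum_nonneg (fun k => hanon _))]
  -- pushforward
  set ν := μ.map Y with hν
  have hνsing : ∀ y : ℕ, ν {y} = ENNReal.ofReal (nbA r p y) := by
    intro y
    rw [hν, Measure.map_apply hYmeas (measurableSet_singleton y)]
    exact hY' y
  have hgmeas : Measurable (fun y : ℕ => (y : ℝ)) := measurable_from_top
  have hint : Integrable (fun y : ℕ => (y : ℝ)) ν := by
    refine ⟨hgmeas.aestronglyMeasurable, ?_⟩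
    rw [HasFiniteIntegral, lintegral_countable']
    have : ∀ y : ℕ, ‖(y : ℝ)‖ₑ * ν {y} = ENNReal.ofReal ((y : ℝ) * nbA r p y) := by
      intro y
      rw [hνsing y, Real.enorm_eq_ofReal (Nat.cast_nonneg y),
        ← ENNReal.ofReal_mul (Nat.cast_nonneg y)]
    rw [tsum_congr this, ← ENNReal.ofReal_tsum_of_nonneg
      (fun y => mul_nonneg (Nat.cast_nonneg y) (hanon y)) hsb]
    exact ENNReal.ofReal_lt_top
  -- mean
  have hmean : ∫ ω, (Y ω : ℝ) ∂μ = ∑' y : ℕ, (y : ℝ) * nbA r p y := by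
    rw [← integral_map hYmeas.aemeasurable hgmeas.aestronglyMeasurable,
      integral_countable' hint]
    apply tsum_congr
    intro y
    rw [measureReal_def, hνsing y, smul_eq_mul, ENNReal.toReal_ofReal (hanon y), mul_comm]
  -- set integral
  have hset : ∫ ω in {ω | n < Y ω}, (Y ω : ℝ) ∂μ
      = ∑' k : ℕ, ((k + (n + 1) : ℕ) : ℝ) * nbA r p (k + (n + 1)) := by
    have hs : MeasurableSet {y : ℕ | n < y} := MeasurableSet.of_discrete
    have hpre : {ω | n < Y ω} = Y ⁻¹' {y : ℕ | n < y} := rfl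
    rw [hpre, ← setIntegral_map hs hgmeas.aestronglyMeasurable hYmeas.aemeasurable,
      integral_countable' hint.restrict]
    have hrs : ∀ y : ℕ, ((ν.restrict {y : ℕ | n < y}) {y}).toReal • (y : ℝ)
        = (if n < y then (y : ℝ) * nbA r p y else 0) := by
      intro y
      rw [Measure.restrict_apply (measurableSet_singleton y)]
      by_cases h : n < y
      · have : ({y} : Set ℕ) ∩ {y : ℕ | n < y} = {y} := by
          ext z
          simp only [Set.mem_inter_iff, Set.mem_singleton_iff, Set.mem_setOf_eq]
          constructor
          · rintro ⟨h1, _⟩; exact h1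
          · intro h1; exact ⟨h1, by omega⟩
        rw [this, hνsing y, if_pos h, smul_eq_mul, ENNReal.toReal_ofReal (hanon y), mul_comm]
      · have : ({y} : Set ℕ) ∩ {y : ℕ | n < y} = ∅ := by
          ext z
          simp only [Set.mem_inter_iff, Set.mem_singleton_iff, Set.mem_setOf_eq,
            Set.mem_empty_iff_false, iff_false, not_and]
          intro hz; omega
        rw [this, if_neg h]
        simp
    simp only [measureReal_def]; rw [tsum_congr hrs]
    have hcsum : Summable (fun y : ℕ => if n < y then (y : ℝ) * nbA r p y else 0) := by
      apply Summable.of_nonneg_of_le _ _ hsb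
      · intro y
        by_cases h : n < y <;> simp [h, mul_nonneg (Nat.cast_nonneg y) (hanon y)]
      · intro y
        by_cases h : n < y <;> simp [h, mul_nonneg (Nat.cast_nonneg y) (hanon y)]
    rw [← Summable.sum_add_tsum_nat_add (n + 1) hcsum]
    have h0 : ∑ i ∈ Finset.range (n + 1), (if n < i then (i : ℝ) * nbA r p i else 0) = 0 := by
      apply Finset.sum_eq_zero
      intro i hi
      rw [Finset.mem_range] at hi
      rw [if_neg (by omega)]
    rw [h0, zero_add]
    apply tsum_congr
    intro k
    rw [if_pos (by omega)]
  -- abbreviations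
  set a1 := nbA r p (n + 1) with ha1
  set T := ∑' k : ℕ, ((k + (n + 1) : ℕ) : ℝ) * nbA r p (k + (n + 1)) with hTdef
  set S := ∑' k : ℕ, nbA r p (k + (n + 1)) with hSdef
  set S' := ∑' k : ℕ, nbA r p (k + (n + 1 + 1)) with hS'def
  set M := ∑' y : ℕ, (y : ℝ) * nbA r p y with hMdef
  have hS : (μ {ω | n < Y ω}).toReal = S := htailR n
  have hS2 : (μ {ω | n + 1 < Y ω}).toReal = S' := htailR (n + 1)
  have hSpos : 0 < S := by
    rw [← hS]
    exact ENNReal.toReal_pos hpos (measure_ne_top μ _)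
  have han1 : (μ {ω | Y ω = n + 1}).toReal = a1 := by
    rw [hY', ENNReal.toReal_ofReal (hanon _)]
  have ha1pos : 0 < a1 := by
    rw [ha1]
    unfold nbA
    have hc : 0 < Nat.choose (n + 1 + r - 1) (n + 1) := Nat.choose_pos (by omega)
    have : (0:ℝ) < Nat.choose (n + 1 + r - 1) (n + 1) := by exact_mod_cast hc
    have h1 : (0:ℝ) < p ^ r := pow_pos hp.1 r
    have h2 : (0:ℝ) < (1 - p) ^ (n + 1) := pow_pos (by linarith [hp.2]) _
    positivity
  have hS'nonneg : 0 ≤ S' := tsum_nonneg (fun k => hanon _)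
  have hsplit : S = a1 + S' := by
    rw [hSdef, Summable.tsum_eq_zero_add (htailsum n)]
    congr 1
    · simp [ha1]
    · exact tsum_congr (fun k => by congr 1; omega)
  have hkey0 := nb_keyA r p hr hp 0
  simp only [Nat.add_zero, Nat.cast_zero, zero_mul, zero_add] at hkey0
  rw [← hMdef, htot, mul_one] at hkey0
  have hkeyn := nb_keyA r p hr hp (n + 1)
  rw [← hTdef, ← hSdef, ← ha1] at hkeyn
  push_cast at hkeyn
  have hT : p * T = ((n : ℝ) + 1) * a1 + p * M * S := by
    linear_combination hkeyn - S * hkey0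
  rw [hset, hmean, hS, hS2, han1]
  have hden : 1 + S' / a1 = S / a1 := by
    rw [hsplit]
    field_simp
  rw [hden]
  have hp0 : p ≠ 0 := ne_of_gt hp.1
  field_simp
  linear_combination hT
end

section
/- Fix x ∈ (0,1], λ ∈ [0,1), a continuous nonnegative u : Δ(K) → ℝ, and suppose v : Δ(K) → ℝ satisfies the recursion v(p) = Cav[(1−λ)u + λ(1−x)(v∘φ)](p) + λx⟨p, ξ⟩ with ξ_ℓ = v(δ_ℓ M) and φ(q) = qM. If p ∈ Δ(K) satisfies u(p) = (Cav u)(p), then v(p) = (1−λ)u(p) + λ(1−x)v(pM) + λx⟨p, ξ⟩; i.e., the no-split action is optimal at p. -/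
open Finset

/-- The concavification (concave envelope) of `u` over the simplex `Δ(K)`. -/
noncomputable def cav {K : Type*} [Fintype K] (u : (K → ℝ) → ℝ) (p : K → ℝ) : ℝ :=
  sInf {y | ∃ g : (K → ℝ) → ℝ, ConcaveOn ℝ (stdSimplex ℝ K) g ∧
    (∀ q ∈ stdSimplex ℝ K, u q ≤ g q) ∧ g p = y}

section Aux
variable {K : Type*} [Fintype K]

lemma cav_le_of_majorant (f g : (K → ℝ) → ℝ)
    (hg : ConcaveOn ℝ (stdSimplex ℝ K) g)
    (hm : ∀ q ∈ stdSimplex ℝ K, f q ≤ g q)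
    {q : K → ℝ} (hq : q ∈ stdSimplex ℝ K) :
    cav f q ≤ g q := by
  apply csInf_le
  · refine ⟨f q, ?_⟩
    rintro y ⟨g', hg', hm', rfl⟩
    exact hm' q hq
  · exact ⟨g, hg, hm, rfl⟩

lemma le_cav (f : (K → ℝ) → ℝ)
    (hex : ∃ g : (K → ℝ) → ℝ, ConcaveOn ℝ (stdSimplex ℝ K) g ∧
      ∀ q ∈ stdSimplex ℝ K, f q ≤ g q)
    {q : K → ℝ} (hq : q ∈ stdSimplex ℝ K) :
    f q ≤ cav f q := by
  obtain ⟨g0, hg0, hm0⟩ := hex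
  refine le_csInf ⟨g0 q, g0, hg0, hm0, rfl⟩ ?_
  rintro y ⟨g, hg, hm, rfl⟩
  exact hm q hq

lemma cav_concave (f : (K → ℝ) → ℝ)
    (hex : ∃ g : (K → ℝ) → ℝ, ConcaveOn ℝ (stdSimplex ℝ K) g ∧
      ∀ q ∈ stdSimplex ℝ K, f q ≤ g q) :
    ConcaveOn ℝ (stdSimplex ℝ K) (cav f) := by
  obtain ⟨g0, hg0, hm0⟩ := hex
  refine ⟨convex_stdSimplex ℝ K, fun q1 hq1 q2 hq2 a b ha hb hab => ?_⟩
  refine le_csInf ⟨g0 _, g0, hg0, hm0, rfl⟩ ?_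
  rintro y ⟨g, hg, hm, rfl⟩
  calc a • cav f q1 + b • cav f q2
      ≤ a • g q1 + b • g q2 := by
        have h1 : cav f q1 ≤ g q1 := cav_le_of_majorant f g hg hm hq1
        have h2 : cav f q2 ≤ g q2 := cav_le_of_majorant f g hg hm hq2
        exact add_le_add (smul_le_smul_of_nonneg_left h1 ha)
          (smul_le_smul_of_nonneg_left h2 hb)
    _ ≤ g (a • q1 + b • q2) := hg.2 hq1 hq2 ha hb hab

end Aux

/-- If v satisfies the recursion
v(p) = Cav[(1−λ)u + λ(1−x)(v∘φ)](p) + λx⟨p, ξ⟩ and u(p) = (Cav u)(p), then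
v(p) = (1−λ)u(p) + λ(1−x)v(pM) + λx⟨p, ξ⟩, i.e. not splitting is optimal at p. -/
theorem no_split_optimal_at_cav_point
    {K : Type*} [Fintype K] (x l : ℝ) (hx : x ∈ Set.Ioc (0:ℝ) 1)
    (hl : l ∈ Set.Ico (0:ℝ) 1)
    (M : K → K → ℝ) (hMnonneg : ∀ i j, 0 ≤ M i j) (hMrow : ∀ i, ∑ j, M i j = 1)
    (u : (K → ℝ) → ℝ) (hu : ContinuousOn u (stdSimplex ℝ K))
    (hu0 : ∀ q ∈ stdSimplex ℝ K, 0 ≤ u q)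
    (v : (K → ℝ) → ℝ)
    (hrec : ∀ p ∈ stdSimplex ℝ K,
      v p = cav (fun q => (1 - l) * u q + l * (1 - x) * v (fun j => ∑ i, q i * M i j)) p
        + l * x * ∑ k, p k * v (fun j => M k j))
    (p : K → ℝ) (hp : p ∈ stdSimplex ℝ K) (hcav : u p = cav u p) :
    v p = (1 - l) * u p + l * (1 - x) * v (fun j => ∑ i, p i * M i j)
      + l * x * ∑ k, p k * v (fun j => M k j) := by
  set S := stdSimplex ℝ K with hS
  set φ : (K → ℝ) → (K → ℝ) := fun q j => ∑ i, q i * M i j with hφ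
  set f : (K → ℝ) → ℝ := fun q => (1 - l) * u q + l * (1 - x) * v (φ q) with hf
  set L : (K → ℝ) → ℝ := fun q => l * x * ∑ k, q k * v (fun j => M k j) with hL
  have hrec' : ∀ q ∈ S, v q = cav f q + L q := hrec
  -- φ maps S to S
  have hφS : ∀ q ∈ S, φ q ∈ S := by
    intro q hq
    constructor
    · intro j
      exact Finset.sum_nonneg fun i _ => mul_nonneg (hq.1 i) (hMnonneg i j)
    · rw [Finset.sum_comm]
      calc ∑ i, ∑ j, q i * M i j = ∑ i, q i * ∑ j, M i j := by
            simp [Finset.mul_sum]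
        _ = 1 := by simp [hMrow, hq.2]
  -- φ is affine
  have hφlin : ∀ (q1 q2 : K → ℝ) (a b : ℝ),
      φ (a • q1 + b • q2) = a • φ q1 + b • φ q2 := by
    intro q1 q2 a b
    funext j
    simp only [hφ, Pi.add_apply, Pi.smul_apply, smul_eq_mul]
    rw [Finset.mul_sum, Finset.mul_sum, ← Finset.sum_add_distrib]
    congr 1; funext i; ring
  -- L is affine
  have hLlin : ∀ (q1 q2 : K → ℝ) (a b : ℝ),
      L (a • q1 + b • q2) = a * L q1 + b * L q2 := by
    intro q1 q2 a b
    simp only [hL, Pi.add_apply, Pi.smul_apply, smul_eq_mul, Finset.mul_sum,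
      ← Finset.sum_add_distrib]
    refine Finset.sum_congr rfl fun k _ => by ring
  -- existence of a concave majorant of f on S
  have hex : ∃ g : (K → ℝ) → ℝ, ConcaveOn ℝ S g ∧ ∀ q ∈ S, f q ≤ g q := by
    by_contra h
    -- then the majorant set is empty, so cav f ≡ 0 and v is affine on S
    have hcav0 : ∀ q : K → ℝ, cav f q = 0 := by
      intro q
      have : {y | ∃ g : (K → ℝ) → ℝ, ConcaveOn ℝ S g ∧
          (∀ r ∈ S, f r ≤ g r) ∧ g q = y} = ∅ := by
        ext y
        simp only [Set.mem_setOf_eq, Set.mem_empty_iff_false, iff_false]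
        rintro ⟨g, hg, hm, rfl⟩
        exact h ⟨g, hg, hm⟩
      rw [cav, ← hS, this, Real.sInf_empty]
    have hvlin : ∀ q ∈ S, v q = L q := by
      intro q hq; rw [hrec' q hq, hcav0 q, zero_add]
    -- f agrees on S with a continuous function
    set F : (K → ℝ) → ℝ := fun q => (1 - l) * u q + l * (1 - x) * L (φ q) with hF
    have hfF : ∀ q ∈ S, f q = F q := by
      intro q hq
      simp only [hf, hF]
      rw [hvlin (φ q) (hφS q hq)]
    have hFcont : ContinuousOn F S := by
      apply ContinuousOn.add
      · exact (continuousOn_const.mul hu)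
      · apply ContinuousOn.mul continuousOn_const
        apply Continuous.continuousOn
        simp only [hL, hφ]
        apply Continuous.mul continuous_const
        apply continuous_finset_sum
        intro k _
        exact (continuous_finset_sum _ fun i _ =>
          (continuous_apply i).mul continuous_const).mul continuous_const
    obtain ⟨C, hC⟩ := (isCompact_stdSimplex ℝ K).bddAbove_image hFcont
    refine h ⟨fun _ => C, concaveOn_const C (convex_stdSimplex ℝ K), ?_⟩
    intro q hq
    rw [hfF q hq]
    exact hC ⟨q, hq, rfl⟩
  -- cav f is concave, hence v ∘ φ is concave on S
  have hconcf : ConcaveOn ℝ S (cav f) := cav_concave f hex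
  have hvφ : ConcaveOn ℝ S (fun q => v (φ q)) := by
    refine ⟨convex_stdSimplex ℝ K, fun q1 hq1 q2 hq2 a b ha hb hab => ?_⟩
    have hmem : a • q1 + b • q2 ∈ S := (convex_stdSimplex ℝ K) hq1 hq2 ha hb hab
    simp only
    rw [hrec' (φ q1) (hφS q1 hq1), hrec' (φ q2) (hφS q2 hq2),
      hrec' (φ (a • q1 + b • q2)) (hφS _ hmem), hφlin q1 q2 a b,
      hLlin (φ q1) (φ q2) a b]
    have h1 := hconcf.2 (hφS q1 hq1) (hφS q2 hq2) ha hb hab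
    simp only [smul_eq_mul] at h1 ⊢
    linarith
  -- cav u is a concave majorant of u
  have hexu : ∃ g : (K → ℝ) → ℝ, ConcaveOn ℝ S g ∧ ∀ q ∈ S, u q ≤ g q := by
    obtain ⟨Cu, hCu⟩ := (isCompact_stdSimplex ℝ K).bddAbove_image hu
    exact ⟨fun _ => Cu, concaveOn_const Cu (convex_stdSimplex ℝ K),
      fun q hq => hCu ⟨q, hq, rfl⟩⟩
  -- the candidate concave majorant of f that touches f at p
  set g : (K → ℝ) → ℝ := fun q => (1 - l) * cav u q + l * (1 - x) * v (φ q) with hg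
  have hgconc : ConcaveOn ℝ S g := by
    have hl1 : (0:ℝ) ≤ 1 - l := by linarith [hl.2]
    have hlx : (0:ℝ) ≤ l * (1 - x) := mul_nonneg hl.1 (by linarith [hx.2])
    have h1 := (cav_concave u hexu).smul hl1
    have h2 := hvφ.smul hlx
    have h3 := h1.add h2
    convert h3 using 1
    · rfl
    · rfl
    · funext q
      simp only [hg, Pi.add_apply, smul_eq_mul]
  have hgmaj : ∀ q ∈ S, f q ≤ g q := by
    intro q hq
    simp only [hf, hg]
    have := le_cav u hexu hq
    have hl1 : (0:ℝ) ≤ 1 - l := by linarith [hl.2]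
    nlinarith
  have hgp : g p = f p := by
    simp only [hf, hg, ← hcav]
  have hle : cav f p ≤ f p := by
    have := cav_le_of_majorant f g hgconc hgmaj hp
    rwa [hgp] at this
  have hge : f p ≤ cav f p := le_cav f hex hp
  have hcavf : cav f p = f p := le_antisymm hle hge
  rw [hrec' p hp, hcavf]
end

section
/- Let x ∈ (0,1], r ∈ ℕ, n ∈ ℕ with r ≤ nx, and let Y ∼ NB(r, x) (failures before the r-th success). Then conditional on {Y > n − r}, E[r + Y | Y > n − r] ≤ r(1−x)/x + (n − r + 1)/x + r. In particular, with a ≤ nx, E[κ_1+⋯+κ_a | κ_1+⋯+κ_a > n] ≤ n + 2n/x where κ_1+⋯+κ_a − a ∼ NB(a,x). -/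
open MeasureTheory

open Filter Topology
open scoped ENNReal NNReal

namespace TNBAux

noncomputable def q (x : ℝ) (r : ℕ) (y : ℕ) : ℝ :=
  (Nat.choose (y + r - 1) y : ℝ) * x ^ r * (1 - x) ^ y

lemma q_nonneg {x : ℝ} (hx0 : 0 < x) (hx1 : x ≤ 1) (r y : ℕ) : 0 ≤ q x r y := by
  have h : (0:ℝ) ≤ 1 - x := by linarith
  unfold q
  positivity

lemma q_rec {x : ℝ} (r : ℕ) (hr : 1 ≤ r) (y : ℕ) :
    ((y:ℝ) + 1) * q x r (y+1) = ((y:ℝ) + r) * (1 - x) * q x r y := by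
  have h2 := Nat.add_one_mul_choose_eq (y + r - 1) y
  have h3 : y + r - 1 + 1 = y + r := by omega
  rw [h3] at h2
  have hc : ((y:ℝ) + r) * (Nat.choose (y + r - 1) y : ℝ)
      = (Nat.choose (y + r) (y+1) : ℝ) * ((y:ℝ) + 1) := by
    exact_mod_cast congrArg (Nat.cast : ℕ → ℝ) h2
  have h1 : y + 1 + r - 1 = y + r := by omega
  unfold q
  rw [h1]
  linear_combination (-(x ^ r * (1 - x) ^ y * (1 - x))) * hc

lemma summable_rq {x : ℝ} (hx0 : 0 < x) (hx1 : x ≤ 1) (r : ℕ) (hr : 1 ≤ r) :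
    Summable (fun y => ((r:ℝ) + y) * q x r y) := by
  have hr' : (1:ℝ) ≤ r := by exact_mod_cast hr
  apply summable_of_ratio_norm_eventually_le (r := 1 - x/2) (by linarith)
  filter_upwards [eventually_ge_atTop (⌈(2*(r:ℝ))/x⌉₊)] with y hy
  have hy' : (2*(r:ℝ))/x ≤ y := (Nat.ceil_le).mp hy
  have hxy : 2*(r:ℝ) ≤ x * y := by
    rw [div_le_iff₀ hx0] at hy'; linarith
  have qn : 0 ≤ q x r y := q_nonneg hx0 hx1 r y
  have qn1 : 0 ≤ q x r (y+1) := q_nonneg hx0 hx1 r (y+1)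
  have hrec := q_rec (x := x) r hr y
  have hy0 : (0:ℝ) ≤ y := Nat.cast_nonneg y
  rw [Real.norm_of_nonneg (by positivity), Real.norm_of_nonneg (by positivity)]
  have hpos : (0:ℝ) < (y:ℝ) + 1 := by positivity
  have key : ((r:ℝ) + y + 1) * (1 - x) ≤ (1 - x/2) * ((y:ℝ) + 1) := by nlinarith
  refine le_of_mul_le_mul_right ?_ hpos
  have h1 : ((r:ℝ) + (y+1:ℕ)) * q x r (y+1) * ((y:ℝ)+1)
      = ((r:ℝ) + y + 1) * (((y:ℝ) + r) * (1 - x) * q x r y) := by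
    push_cast
    rw [← hrec]; ring
  have h2 : ((r:ℝ) + y + 1) * (1 - x) * (((y:ℝ) + r) * q x r y)
      ≤ ((1 - x/2) * ((y:ℝ) + 1)) * (((y:ℝ) + r) * q x r y) :=
    mul_le_mul_of_nonneg_right key (by positivity)
  calc ((r:ℝ) + (y+1:ℕ)) * q x r (y+1) * ((y:ℝ)+1)
      = ((r:ℝ) + y + 1) * (1 - x) * (((y:ℝ) + r) * q x r y) := by rw [h1]; ring
    _ ≤ ((1 - x/2) * ((y:ℝ) + 1)) * (((y:ℝ) + r) * q x r y) := h2
    _ = (1 - x/2) * (((r:ℝ) + y) * q x r y) * ((y:ℝ)+1) := by ring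

lemma summable_q {x : ℝ} (hx0 : 0 < x) (hx1 : x ≤ 1) (r : ℕ) (hr : 1 ≤ r) :
    Summable (fun y => q x r y) := by
  have hr' : (1:ℝ) ≤ r := by exact_mod_cast hr
  refine (summable_rq hx0 hx1 r hr).of_nonneg_of_le (fun (y:ℕ) => q_nonneg hx0 hx1 r y) (fun (y:ℕ) => ?_)
  have := q_nonneg hx0 hx1 r y
  nlinarith [Nat.cast_nonneg (α := ℝ) y]

lemma summable_yq {x : ℝ} (hx0 : 0 < x) (hx1 : x ≤ 1) (r : ℕ) (hr : 1 ≤ r) :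
    Summable (fun (y:ℕ) => (y:ℝ) * q x r y) := by
  have hr' : (1:ℝ) ≤ r := by exact_mod_cast hr
  refine (summable_rq hx0 hx1 r hr).of_nonneg_of_le
    (fun (y:ℕ) => mul_nonneg (Nat.cast_nonneg y) (q_nonneg hx0 hx1 r y)) (fun (y:ℕ) => ?_)
  have := q_nonneg hx0 hx1 r y
  nlinarith [Nat.cast_nonneg (α := ℝ) y]


lemma key_tsum {x : ℝ} (hx0 : 0 < x) (hx1 : x ≤ 1) (r : ℕ) (hr : 1 ≤ r) (m : ℕ) :
    ∑' k : ℕ, ((r:ℝ) + ((m+1+k : ℕ) : ℝ)) * q x r (m+1+k)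
      ≤ ((r:ℝ) * (1 - x) / x + ((m:ℝ) + 1) / x + r) * ∑' k : ℕ, q x r (m+1+k) := by
  have hx0' : x ≠ 0 := ne_of_gt hx0
  set μr : ℝ := (r:ℝ) * (1 - x) / x with hμr
  set F : ℕ → ℝ := fun y => (y:ℝ) / x * q x r y with hF
  have hinj : Function.Injective (fun k : ℕ => m+1+k) := add_right_injective (m+1)
  have hsq : Summable (fun k : ℕ => q x r (m+1+k)) :=
    ((summable_q hx0 hx1 r hr).comp_injective hinj)
  have hsyq : Summable (fun k : ℕ => ((m+1+k:ℕ):ℝ) * q x r (m+1+k)) :=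
    ((summable_yq hx0 hx1 r hr).comp_injective hinj)
  have hsg : Summable (fun k : ℕ => (((m+1+k:ℕ):ℝ) - μr) * q x r (m+1+k)) := by
    have := hsyq.sub (hsq.mul_left μr)
    simpa [sub_mul] using this
  have htel : ∀ y : ℕ, ((y:ℝ) - μr) * q x r y = F y - F (y+1) := by
    intro y
    have hrec := q_rec (x := x) r hr y
    simp only [hF, hμr]
    push_cast
    field_simp
    linear_combination hrec
  have hFtend : Tendsto (fun N : ℕ => F (m+1+N)) atTop (𝓝 0) := by
    have h0 : Tendsto (fun y : ℕ => (y:ℝ) * q x r y) atTop (𝓝 0) :=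
      (summable_yq hx0 hx1 r hr).tendsto_atTop_zero
    have h1 : Tendsto (fun N : ℕ => m+1+N) atTop atTop := by
      simpa [Nat.add_comm] using tendsto_add_atTop_nat (m+1)
    have h2 : Tendsto (fun N : ℕ => ((m+1+N:ℕ):ℝ) * q x r (m+1+N)) atTop (𝓝 0) :=
      h0.comp h1
    have h3 : Tendsto (fun N : ℕ => (1/x) * (((m+1+N:ℕ):ℝ) * q x r (m+1+N))) atTop
        (𝓝 ((1/x) * 0)) := h2.const_mul _
    simpa [hF, div_eq_mul_inv, mul_comm, mul_assoc, mul_left_comm] using h3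
  have hpartial : ∀ N : ℕ, ∑ k ∈ Finset.range N, (((m+1+k:ℕ):ℝ) - μr) * q x r (m+1+k)
      = F (m+1) - F (m+1+N) := by
    intro N
    have h := Finset.sum_range_sub' (fun i => F (m+1+i)) N
    rw [← h]
    exact Finset.sum_congr rfl (fun k _ => htel (m+1+k))
  have htsum_g : ∑' k : ℕ, (((m+1+k:ℕ):ℝ) - μr) * q x r (m+1+k) = F (m+1) := by
    have h1 := hsg.hasSum.tendsto_sum_nat
    rw [show (fun N : ℕ => ∑ i ∈ Finset.range N, (((m+1+i:ℕ):ℝ) - μr) * q x r (m+1+i))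
        = fun N => F (m+1) - F (m+1+N) from funext hpartial] at h1
    have h2 : Tendsto (fun N : ℕ => F (m+1) - F (m+1+N)) atTop (𝓝 (F (m+1) - 0)) :=
      tendsto_const_nhds.sub hFtend
    have := tendsto_nhds_unique h1 h2
    simpa using this
  have hsplit : ∀ k : ℕ, ((r:ℝ) + ((m+1+k:ℕ):ℝ)) * q x r (m+1+k)
      = ((r:ℝ) + μr) * q x r (m+1+k) + (((m+1+k:ℕ):ℝ) - μr) * q x r (m+1+k) :=
    fun k => by ring
  rw [tsum_congr hsplit, Summable.tsum_add (hsq.mul_left _) hsg, tsum_mul_left, htsum_g]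
  have hq1 : q x r (m+1) ≤ ∑' k : ℕ, q x r (m+1+k) := by
    have h := Summable.le_tsum hsq 0 (fun j _ => q_nonneg hx0 hx1 r _)
    simpa using h
  have hF1 : F (m+1) ≤ (((m:ℝ)+1)/x) * ∑' k : ℕ, q x r (m+1+k) := by
    have h : F (m+1) = (((m:ℝ)+1)/x) * q x r (m+1) := by
      simp only [hF]; push_cast; ring
    rw [h]
    exact mul_le_mul_of_nonneg_left hq1 (by positivity)
  calc ((r:ℝ) + μr) * ∑' k : ℕ, q x r (m+1+k) + F (m+1)
      ≤ ((r:ℝ) + μr) * ∑' k : ℕ, q x r (m+1+k)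
        + (((m:ℝ)+1)/x) * ∑' k : ℕ, q x r (m+1+k) := by linarith
    _ = (μr + ((m:ℝ) + 1) / x + r) * ∑' k : ℕ, q x r (m+1+k) := by ring

end TNBAux

open TNBAux

/-- Let Y ∼ NB(r,x) (failures before the r-th success), x ∈ (0,1],
r ≤ nx. Then E[r + Y | Y > n − r] ≤ r(1−x)/x + (n − r + 1)/x + r, and in
particular E[r + Y | r + Y > n] ≤ n + 2n/x (the bound used for κ_1+⋯+κ_a, whose
law is that of r + Y with r = a). -/
theorem truncated_negative_binomial_bound
    {Ω : Type*} [MeasurableSpace Ω] (μ : Measure Ω) [IsProbabilityMeasure μ]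
    (x : ℝ) (hx : x ∈ Set.Ioc (0:ℝ) 1)
    (r n : ℕ) (hr : 1 ≤ r) (hrn : (r : ℝ) ≤ n * x)
    (Y : Ω → ℕ) (hYmeas : Measurable Y)
    (hY : ∀ y : ℕ, μ {ω | Y ω = y}
      = ENNReal.ofReal ((Nat.choose (y + r - 1) y : ℝ) * x ^ r * (1 - x) ^ y))
    (hpos : μ {ω | n - r < Y ω} ≠ 0) (hpos' : μ {ω | n < r + Y ω} ≠ 0) :
    ((∫ ω in {ω | n - r < Y ω}, ((r : ℝ) + Y ω) ∂μ) / (μ {ω | n - r < Y ω}).toReal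
        ≤ r * (1 - x) / x + ((n : ℝ) - r + 1) / x + r) ∧
      (∫ ω in {ω | n < r + Y ω}, ((r : ℝ) + Y ω) ∂μ) / (μ {ω | n < r + Y ω}).toReal
        ≤ n + 2 * n / x := by
  obtain ⟨hx0, hx1⟩ := hx
  have hx0' : x ≠ 0 := ne_of_gt hx0
  have hr' : (1:ℝ) ≤ r := by exact_mod_cast hr
  have hrnn : r ≤ n := by
    have : (r:ℝ) ≤ n := le_trans hrn (by nlinarith [Nat.cast_nonneg (α := ℝ) n])
    exact_mod_cast this
  set m : ℕ := n - r with hm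
  have hmcast : ((m:ℕ):ℝ) = (n:ℝ) - r := by
    rw [hm, Nat.cast_sub hrnn]
  have hY' : ∀ y : ℕ, μ {ω | Y ω = y} = ENNReal.ofReal (q x r y) := hY
  -- sets
  have hsets : {ω | n < r + Y ω} = {ω | m < Y ω} := by
    ext ω; simp only [Set.mem_setOf_eq, hm]; omega
  set S : Set Ω := {ω | m < Y ω} with hS
  set A : ℕ → Set Ω := fun k => {ω | Y ω = m + 1 + k} with hA
  have hApre : ∀ k, A k = Y ⁻¹' {m+1+k} := fun k => rfl
  have hAmeas : ∀ k, MeasurableSet (A k) := fun k =>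
    (hApre k) ▸ hYmeas (measurableSet_singleton _)
  have hAdisj : Pairwise (Function.onFun Disjoint A) := by
    intro i j hij
    refine Set.disjoint_left.mpr (fun ω hi hj => hij ?_)
    simp only [hA, Set.mem_setOf_eq] at hi hj
    omega
  have hUnion : S = ⋃ k, A k := by
    ext ω
    simp only [hS, hA, Set.mem_setOf_eq, Set.mem_iUnion]
    constructor
    · intro h; exact ⟨Y ω - (m+1), by omega⟩
    · rintro ⟨k, hk⟩; omega
  have hSmeas : MeasurableSet S := by
    rw [hUnion]; exact MeasurableSet.iUnion hAmeas
  have hqnn : ∀ y, 0 ≤ q x r y := q_nonneg hx0 hx1 r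
  have hsq : Summable (fun k : ℕ => q x r (m+1+k)) :=
    ((summable_q hx0 hx1 r hr).comp_injective (add_right_injective (m+1)))
  have hsrq : Summable (fun k : ℕ => ((r:ℝ) + ((m+1+k:ℕ):ℝ)) * q x r (m+1+k)) :=
    ((summable_rq hx0 hx1 r hr).comp_injective (add_right_injective (m+1)))
  set T : ℝ := ∑' k : ℕ, q x r (m+1+k) with hT
  -- measure of S
  have hmeasS : μ S = ENNReal.ofReal T := by
    rw [hUnion, measure_iUnion hAdisj hAmeas]
    simp only [hA]
    rw [hT, ENNReal.ofReal_tsum_of_nonneg (fun k => hqnn _) hsq]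
    exact tsum_congr (fun k => (hY' (m+1+k)))
  have hT0 : 0 < T := by
    by_contra h
    push_neg at h
    exact hpos (by rw [hmeasS, ENNReal.ofReal_eq_zero.mpr h])
  have htoReal : (μ S).toReal = T := by rw [hmeasS, ENNReal.toReal_ofReal hT0.le]
  -- integrability
  have hmeas_f : Measurable (fun ω => (r:ℝ) + (Y ω : ℝ)) :=
    measurable_const.add (measurable_from_top.comp hYmeas)
  have hInt : Integrable (fun ω => (r:ℝ) + (Y ω : ℝ)) μ := by
    refine ⟨hmeas_f.aestronglyMeasurable, ?_⟩
    show (∫⁻ ω, (‖(r:ℝ) + (Y ω:ℝ)‖₊ : ℝ≥0∞) ∂μ) < ⊤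
    have hmapY : ∀ y : ℕ, (μ.map Y) {y} = ENNReal.ofReal (q x r y) := by
      intro y
      rw [Measure.map_apply hYmeas (measurableSet_singleton y)]
      exact hY' y
    have h1 : ∫⁻ ω, ‖(r:ℝ) + (Y ω : ℝ)‖₊ ∂μ = ∫⁻ y, ‖(r:ℝ) + (y:ℝ)‖₊ ∂(μ.map Y) :=
      (lintegral_map (f := fun y : ℕ => (‖(r:ℝ) + (y:ℝ)‖₊ : ℝ≥0∞))
        measurable_from_top hYmeas).symm
    rw [h1, lintegral_countable' (fun y : ℕ => (‖(r:ℝ) + (y:ℝ)‖₊ : ℝ≥0∞))]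
    have h2 : ∀ y : ℕ, (‖(r:ℝ) + (y:ℝ)‖₊ : ℝ≥0∞) * (μ.map Y) {y}
        = ENNReal.ofReal (((r:ℝ) + y) * q x r y) := by
      intro y
      rw [hmapY y, ← enorm_eq_nnnorm, Real.enorm_eq_ofReal (by positivity),
        ← ENNReal.ofReal_mul (by positivity)]
    rw [tsum_congr h2, ← ENNReal.ofReal_tsum_of_nonneg
      (fun y => mul_nonneg (by positivity) (hqnn y)) (summable_rq hx0 hx1 r hr)]
    exact ENNReal.ofReal_lt_top
  have hIntS : IntegrableOn (fun ω => (r:ℝ) + (Y ω : ℝ)) S μ := hInt.integrableOn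
  -- integral computation
  have hIntA : ∀ k : ℕ, ∫ ω in A k, ((r:ℝ) + (Y ω : ℝ)) ∂μ
      = ((r:ℝ) + ((m+1+k:ℕ):ℝ)) * q x r (m+1+k) := by
    intro k
    rw [setIntegral_congr_fun (hAmeas k)
      (g := fun _ => (r:ℝ) + ((m+1+k:ℕ):ℝ)) (fun ω hω => by
        simp only [hA, Set.mem_setOf_eq] at hω
        rw [hω])]
    rw [setIntegral_const, measureReal_def, hY' (m+1+k), ENNReal.toReal_ofReal (hqnn _), smul_eq_mul]
    ring
  have hIntEq : ∫ ω in S, ((r:ℝ) + (Y ω : ℝ)) ∂μ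
      = ∑' k : ℕ, ((r:ℝ) + ((m+1+k:ℕ):ℝ)) * q x r (m+1+k) := by
    rw [hUnion]
    rw [integral_iUnion hAmeas hAdisj (hUnion ▸ hIntS)]
    exact tsum_congr hIntA
  -- main bound for part 1
  set B : ℝ := (r:ℝ) * (1 - x) / x + ((m:ℝ) + 1) / x + r with hB
  have hmain : (∫ ω in S, ((r:ℝ) + (Y ω : ℝ)) ∂μ) / (μ S).toReal ≤ B := by
    rw [hIntEq, htoReal, div_le_iff₀ hT0]
    exact key_tsum hx0 hx1 r hr m
  have hpart1 : (∫ ω in S, ((r:ℝ) + (Y ω : ℝ)) ∂μ) / (μ S).toReal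
      ≤ (r:ℝ) * (1 - x) / x + ((n:ℝ) - r + 1) / x + r := by
    rw [← hmcast]; exact hmain
  constructor
  · exact hpart1
  · rw [hsets]
    refine le_trans hmain ?_
    have hB' : B = ((n:ℝ) + 1) / x := by
      rw [hB, hmcast]
      field_simp
      ring
    rw [hB']
    have hn1 : (1:ℝ) ≤ (n:ℝ) * x := le_trans hr' hrn
    have hn0 : (0:ℝ) ≤ n := Nat.cast_nonneg n
    rw [div_le_iff₀ hx0]
    have hxx : ((n:ℝ) + 2 * n / x) * x = n * x + 2 * n := by field_simp
    rw [hxx]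
    linarith
end
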